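/- For all Λ₁ > 0, Λ₂ > 0, γ > 0, and every positive integer L, there exist a constant Λ₃ > 0 and an integer N̄ ≤ 0 with the following property: whenever a : ℤ → ℝ satisfies a_k ≥ 0 for all k ∈ ℤ, Σ_{k∈ℤ} a_k < ∞, and for every integer N ≤ 0 the inequality Σ_{k ≤ N} a_k ≤ (1/2)·Σ_{k ≤ N+L} a_k + Λ₁·Σ_{k ≤ N} 2^{γ(k−N)} a_k + Λ₂·Σ_{k ≥ N+1} 2^{γ(N−k)} a_k + Λ₂·2^{γN} holds, then for every integer N ≤ N̄ one has Σ_{k ≤ N} a_k ≤ Λ₃·( Σ_{k ≥ N+1} 2^{γ(N−k)} a_k + 2^{γN} ). -/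

import Mathlib

open Set

private lemma r2pos (x : ℝ) : 0 < (2:ℝ) ^ x := Real.rpow_pos_of_pos two_pos x

private lemma r2mono {x y : ℝ} (h : x ≤ y) : (2:ℝ) ^ x ≤ (2:ℝ) ^ y :=
  Real.rpow_le_rpow_of_exponent_le one_le_two h

private lemma r2le1 {x : ℝ} (h : x ≤ 0) : (2:ℝ) ^ x ≤ 1 := by
  simpa [Real.rpow_zero] using r2mono h

private lemma r2ge1 {x : ℝ} (h : 0 ≤ x) : 1 ≤ (2:ℝ) ^ x := by
  simpa [Real.rpow_zero] using r2mono h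

private lemma r2add (x y : ℝ) : (2:ℝ) ^ (x + y) = (2:ℝ) ^ x * (2:ℝ) ^ y :=
  Real.rpow_add two_pos x y

/-- `S(P) = Σ_{k ≤ P} a_k`. -/
noncomputable def SS (a : ℤ → ℝ) (P : ℤ) : ℝ := ∑' k : {k : ℤ // k ≤ P}, a k.1

/-- `T(P) = Σ_{k ≥ P+1} 2^{γ(P-k)} a_k`. -/
noncomputable def TT (γ : ℝ) (a : ℤ → ℝ) (P : ℤ) : ℝ :=
  ∑' k : {k : ℤ // P + 1 ≤ k}, (2:ℝ) ^ (γ * ((P:ℝ) - (k.1:ℝ))) * a k.1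

/-- `U(P) = Σ_{k ≤ P} 2^{γ(k-P)} a_k`. -/
noncomputable def UU (γ : ℝ) (a : ℤ → ℝ) (P : ℤ) : ℝ :=
  ∑' k : {k : ℤ // k ≤ P}, (2:ℝ) ^ (γ * ((k.1:ℝ) - (P:ℝ))) * a k.1

private noncomputable def indS (a : ℤ → ℝ) (P : ℤ) : ℤ → ℝ := indicator {j : ℤ | j ≤ P} a

private noncomputable def indT (γ : ℝ) (a : ℤ → ℝ) (P : ℤ) : ℤ → ℝ :=
  indicator {j : ℤ | P + 1 ≤ j} (fun k => (2:ℝ) ^ (γ * ((P:ℝ) - (k:ℝ))) * a k)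

private noncomputable def indU (γ : ℝ) (a : ℤ → ℝ) (P : ℤ) : ℤ → ℝ :=
  indicator {j : ℤ | j ≤ P} (fun k => (2:ℝ) ^ (γ * ((k:ℝ) - (P:ℝ))) * a k)

private lemma SS_eq (a : ℤ → ℝ) (P : ℤ) : SS a P = ∑' j : ℤ, indS a P j :=
  tsum_subtype {j : ℤ | j ≤ P} a

private lemma TT_eq (γ : ℝ) (a : ℤ → ℝ) (P : ℤ) : TT γ a P = ∑' j : ℤ, indT γ a P j :=
  tsum_subtype {j : ℤ | P + 1 ≤ j} (fun k => (2:ℝ) ^ (γ * ((P:ℝ) - (k:ℝ))) * a k)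

private lemma UU_eq (γ : ℝ) (a : ℤ → ℝ) (P : ℤ) : UU γ a P = ∑' j : ℤ, indU γ a P j :=
  tsum_subtype {j : ℤ | j ≤ P} (fun k => (2:ℝ) ^ (γ * ((k:ℝ) - (P:ℝ))) * a k)

-- pointwise application lemmas
private lemma indS_mem (a : ℤ → ℝ) {P j : ℤ} (h : j ≤ P) : indS a P j = a j :=
  indicator_of_mem (show j ∈ {i : ℤ | i ≤ P} from h) a

private lemma indS_not (a : ℤ → ℝ) {P j : ℤ} (h : ¬ j ≤ P) : indS a P j = 0 :=
  indicator_of_notMem (show j ∉ {i : ℤ | i ≤ P} from h) a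

private lemma indT_mem (γ : ℝ) (a : ℤ → ℝ) {P j : ℤ} (h : P + 1 ≤ j) :
    indT γ a P j = (2:ℝ) ^ (γ * ((P:ℝ) - (j:ℝ))) * a j :=
  indicator_of_mem (show j ∈ {i : ℤ | P + 1 ≤ i} from h) _

private lemma indT_not (γ : ℝ) (a : ℤ → ℝ) {P j : ℤ} (h : ¬ P + 1 ≤ j) :
    indT γ a P j = 0 :=
  indicator_of_notMem (show j ∉ {i : ℤ | P + 1 ≤ i} from h) _

private lemma indU_mem (γ : ℝ) (a : ℤ → ℝ) {P j : ℤ} (h : j ≤ P) :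
    indU γ a P j = (2:ℝ) ^ (γ * ((j:ℝ) - (P:ℝ))) * a j :=
  indicator_of_mem (show j ∈ {i : ℤ | i ≤ P} from h) _

private lemma indU_not (γ : ℝ) (a : ℤ → ℝ) {P j : ℤ} (h : ¬ j ≤ P) :
    indU γ a P j = 0 :=
  indicator_of_notMem (show j ∉ {i : ℤ | i ≤ P} from h) _

private lemma indS_nn (a : ℤ → ℝ) (ha : ∀ k, 0 ≤ a k) (P j : ℤ) : 0 ≤ indS a P j :=
  indicator_nonneg (fun k _ => ha k) j

private lemma indT_nn (γ : ℝ) (a : ℤ → ℝ) (ha : ∀ k, 0 ≤ a k) (P j : ℤ) :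
    0 ≤ indT γ a P j :=
  indicator_nonneg (fun k _ => mul_nonneg (r2pos _).le (ha k)) j

private lemma indU_nn (γ : ℝ) (a : ℤ → ℝ) (ha : ∀ k, 0 ≤ a k) (P j : ℤ) :
    0 ≤ indU γ a P j :=
  indicator_nonneg (fun k _ => mul_nonneg (r2pos _).le (ha k)) j

-- summability
private lemma sum_indS (a : ℤ → ℝ) (hsum : Summable a) (P : ℤ) : Summable (indS a P) :=
  hsum.indicator _

private lemma sum_indT (γ : ℝ) (hγ : 0 < γ) (a : ℤ → ℝ) (ha : ∀ k, 0 ≤ a k)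
    (hsum : Summable a) (P : ℤ) : Summable (indT γ a P) := by
  refine Summable.of_nonneg_of_le (indT_nn γ a ha P) (fun j => ?_) hsum
  by_cases h : P + 1 ≤ j
  · rw [indT_mem γ a h]
    have hj : (P:ℝ) + 1 ≤ (j:ℝ) := by exact_mod_cast h
    have hw : (2:ℝ) ^ (γ * ((P:ℝ) - (j:ℝ))) ≤ 1 := by
      refine r2le1 ?_
      have h0 : (0:ℝ) ≤ γ * ((j:ℝ) - (P:ℝ)) := mul_nonneg hγ.le (by linarith)
      nlinarith
    nlinarith [ha j, r2pos (γ * ((P:ℝ) - (j:ℝ)))]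
  · rw [indT_not γ a h]; exact ha j

private lemma sum_indU (γ : ℝ) (hγ : 0 < γ) (a : ℤ → ℝ) (ha : ∀ k, 0 ≤ a k)
    (hsum : Summable a) (P : ℤ) : Summable (indU γ a P) := by
  refine Summable.of_nonneg_of_le (indU_nn γ a ha P) (fun j => ?_) hsum
  by_cases h : j ≤ P
  · rw [indU_mem γ a h]
    have hj : (j:ℝ) ≤ (P:ℝ) := by exact_mod_cast h
    have hw : (2:ℝ) ^ (γ * ((j:ℝ) - (P:ℝ))) ≤ 1 := by
      refine r2le1 ?_
      have h0 : (0:ℝ) ≤ γ * ((P:ℝ) - (j:ℝ)) := mul_nonneg hγ.le (by linarith)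
      nlinarith
    nlinarith [ha j, r2pos (γ * ((j:ℝ) - (P:ℝ)))]
  · rw [indU_not γ a h]; exact ha j

private lemma SS_nonneg (a : ℤ → ℝ) (ha : ∀ k, 0 ≤ a k) (P : ℤ) : 0 ≤ SS a P :=
  tsum_nonneg fun k => ha _

private lemma TT_nonneg (γ : ℝ) (a : ℤ → ℝ) (ha : ∀ k, 0 ≤ a k) (P : ℤ) : 0 ≤ TT γ a P :=
  tsum_nonneg fun k => mul_nonneg (r2pos _).le (ha _)

/-- Monotonicity of `S`. -/
private lemma SS_mono (a : ℤ → ℝ) (ha : ∀ k, 0 ≤ a k) (hsum : Summable a)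
    {N M : ℤ} (h : N ≤ M) : SS a N ≤ SS a M := by
  rw [SS_eq, SS_eq]
  refine Summable.tsum_le_tsum (fun j => ?_) (sum_indS a hsum N) (sum_indS a hsum M)
  by_cases h1 : j ≤ N
  · rw [indS_mem a h1, indS_mem a (le_trans h1 h)]
  · rw [indS_not a h1]; exact indS_nn a ha M j

/-- `S(M) ≤ S(N) + 2^{γ(M-N)} T(N)` for `N ≤ M`. -/
private lemma SS_bnd (γ : ℝ) (hγ : 0 < γ) (a : ℤ → ℝ) (ha : ∀ k, 0 ≤ a k)
    (hsum : Summable a) {N M : ℤ} (h : N ≤ M) :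
    SS a M ≤ SS a N + (2:ℝ) ^ (γ * ((M:ℝ) - (N:ℝ))) * TT γ a N := by
  set c : ℝ := (2:ℝ) ^ (γ * ((M:ℝ) - (N:ℝ))) with hc
  have hcpos : (0:ℝ) < c := by rw [hc]; exact r2pos _
  have hsT : Summable (indT γ a N) := sum_indT γ hγ a ha hsum N
  have key : ∀ j : ℤ, indS a M j ≤ indS a N j + c * indT γ a N j := by
    intro j
    by_cases h1 : j ≤ N
    · rw [indS_mem a (le_trans h1 h), indS_mem a h1, indT_not γ a (by omega)]
      simp
    · by_cases h2 : j ≤ M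
      · rw [indS_mem a h2, indS_not a h1, indT_mem γ a (by omega)]
        have hj : (j:ℝ) ≤ (M:ℝ) := by exact_mod_cast h2
        have h1' : (1:ℝ) ≤ c * (2:ℝ) ^ (γ * ((N:ℝ) - (j:ℝ))) := by
          rw [hc, ← r2add,
            show γ * ((M:ℝ)-(N:ℝ)) + γ * ((N:ℝ)-(j:ℝ)) = γ * ((M:ℝ)-(j:ℝ)) from by ring]
          exact r2ge1 (mul_nonneg hγ.le (by linarith))
        have h2' := mul_le_mul_of_nonneg_right h1' (ha j)
        calc a j = 1 * a j := (one_mul _).symm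
          _ ≤ c * (2:ℝ) ^ (γ * ((N:ℝ) - (j:ℝ))) * a j := h2'
          _ = 0 + c * ((2:ℝ) ^ (γ * ((N:ℝ) - (j:ℝ))) * a j) := by ring
      · rw [indS_not a h2, indS_not a h1]
        have := indT_nn γ a ha N j
        nlinarith
  have hR : SS a N + c * TT γ a N = ∑' j : ℤ, (indS a N j + c * indT γ a N j) := by
    rw [SS_eq, TT_eq, ← tsum_mul_left]
    exact (Summable.tsum_add (sum_indS a hsum N) (hsT.mul_left c)).symm
  rw [SS_eq, hR]
  exact Summable.tsum_le_tsum key (sum_indS a hsum M) ((sum_indS a hsum N).add (hsT.mul_left c))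

/-- `U(M) ≤ 2^{γ(N-M)} S(N) + 2^{γ(M-N)} T(N)` for `N ≤ M`. -/
private lemma UU_bnd (γ : ℝ) (hγ : 0 < γ) (a : ℤ → ℝ) (ha : ∀ k, 0 ≤ a k)
    (hsum : Summable a) {N M : ℤ} (h : N ≤ M) :
    UU γ a M ≤ (2:ℝ) ^ (γ * ((N:ℝ) - (M:ℝ))) * SS a N
      + (2:ℝ) ^ (γ * ((M:ℝ) - (N:ℝ))) * TT γ a N := by
  set e : ℝ := (2:ℝ) ^ (γ * ((N:ℝ) - (M:ℝ))) with he
  set c : ℝ := (2:ℝ) ^ (γ * ((M:ℝ) - (N:ℝ))) with hc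
  have hepos : (0:ℝ) < e := by rw [he]; exact r2pos _
  have hcpos : (0:ℝ) < c := by rw [hc]; exact r2pos _
  have hsT : Summable (indT γ a N) := sum_indT γ hγ a ha hsum N
  have key : ∀ j : ℤ, indU γ a M j ≤ e * indS a N j + c * indT γ a N j := by
    intro j
    by_cases h1 : j ≤ N
    · rw [indU_mem γ a (le_trans h1 h), indS_mem a h1, indT_not γ a (by omega)]
      have hj : (j:ℝ) ≤ (N:ℝ) := by exact_mod_cast h1
      have hw : (2:ℝ) ^ (γ * ((j:ℝ) - (M:ℝ))) ≤ e := by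
        rw [he]
        exact r2mono (mul_le_mul_of_nonneg_left (by linarith) hγ.le)
      have := mul_le_mul_of_nonneg_right hw (ha j)
      nlinarith
    · by_cases h2 : j ≤ M
      · rw [indU_mem γ a h2, indS_not a h1, indT_mem γ a (by omega)]
        have hj : (j:ℝ) ≤ (M:ℝ) := by exact_mod_cast h2
        have hw : (2:ℝ) ^ (γ * ((j:ℝ) - (M:ℝ))) ≤ 1 :=
          r2le1 (by nlinarith [mul_nonneg hγ.le (show (0:ℝ) ≤ (M:ℝ) - (j:ℝ) by linarith)])
        have h1' : (1:ℝ) ≤ c * (2:ℝ) ^ (γ * ((N:ℝ) - (j:ℝ))) := by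
          rw [hc, ← r2add,
            show γ * ((M:ℝ)-(N:ℝ)) + γ * ((N:ℝ)-(j:ℝ)) = γ * ((M:ℝ)-(j:ℝ)) from by ring]
          exact r2ge1 (mul_nonneg hγ.le (by linarith))
        have h2' := mul_le_mul_of_nonneg_right h1' (ha j)
        have h3' := mul_le_mul_of_nonneg_right hw (ha j)
        nlinarith
      · rw [indU_not γ a h2, indS_not a h1]
        have := indT_nn γ a ha N j
        nlinarith
  have hR : e * SS a N + c * TT γ a N = ∑' j : ℤ, (e * indS a N j + c * indT γ a N j) := by
    rw [SS_eq, TT_eq, ← tsum_mul_left, ← tsum_mul_left]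
    exact (Summable.tsum_add ((sum_indS a hsum N).mul_left e) (hsT.mul_left c)).symm
  rw [UU_eq, hR]
  exact Summable.tsum_le_tsum key (sum_indU γ hγ a ha hsum M)
    (((sum_indS a hsum N).mul_left e).add (hsT.mul_left c))

/-- `T(M) ≤ 2^{γ(M-N)} T(N)` for `N ≤ M`. -/
private lemma TT_bnd (γ : ℝ) (hγ : 0 < γ) (a : ℤ → ℝ) (ha : ∀ k, 0 ≤ a k)
    (hsum : Summable a) {N M : ℤ} (h : N ≤ M) :
    TT γ a M ≤ (2:ℝ) ^ (γ * ((M:ℝ) - (N:ℝ))) * TT γ a N := by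
  set c : ℝ := (2:ℝ) ^ (γ * ((M:ℝ) - (N:ℝ))) with hc
  have hcpos : (0:ℝ) < c := by rw [hc]; exact r2pos _
  have hsT : Summable (indT γ a N) := sum_indT γ hγ a ha hsum N
  have key : ∀ j : ℤ, indT γ a M j ≤ c * indT γ a N j := by
    intro j
    by_cases h1 : M + 1 ≤ j
    · rw [indT_mem γ a h1, indT_mem γ a (by omega)]
      have heq : c * ((2:ℝ) ^ (γ * ((N:ℝ) - (j:ℝ))) * a j)
          = (2:ℝ) ^ (γ * ((M:ℝ) - (j:ℝ))) * a j := by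
        rw [hc, ← mul_assoc, ← r2add,
          show γ * ((M:ℝ)-(N:ℝ)) + γ * ((N:ℝ)-(j:ℝ)) = γ * ((M:ℝ)-(j:ℝ)) from by ring]
      rw [heq]
    · rw [indT_not γ a h1]
      exact mul_nonneg hcpos.le (indT_nn γ a ha N j)
  rw [TT_eq, show c * TT γ a N = ∑' j : ℤ, (c * indT γ a N j) from by
    rw [TT_eq, ← tsum_mul_left]]
  exact Summable.tsum_le_tsum key (sum_indT γ hγ a ha hsum M) (hsT.mul_left c)

/-- Iteration lemma: for all `Λ₁, Λ₂, γ > 0` and every positive integer `L` there are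
`Λ₃ > 0` and an integer `N̄ ≤ 0` such that every summable nonnegative sequence
`(a_k)_{k∈ℤ}` satisfying, for all `N ≤ 0`,
`Σ_{k≤N} a_k ≤ (1/2) Σ_{k≤N+L} a_k + Λ₁ Σ_{k≤N} 2^{γ(k−N)} a_k
  + Λ₂ Σ_{k≥N+1} 2^{γ(N−k)} a_k + Λ₂ 2^{γN}`,
also satisfies, for all `N ≤ N̄`,
`Σ_{k≤N} a_k ≤ Λ₃ (Σ_{k≥N+1} 2^{γ(N−k)} a_k + 2^{γN})`. -/
theorem stmt18 (Λ₁ Λ₂ γ : ℝ) (hΛ₁ : 0 < Λ₁) (hΛ₂ : 0 < Λ₂) (hγ : 0 < γ)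
    (L : ℕ) (hL : 1 ≤ L) :
    ∃ Λ₃ : ℝ, 0 < Λ₃ ∧ ∃ Nbar : ℤ, Nbar ≤ 0 ∧
      ∀ a : ℤ → ℝ, (∀ k, 0 ≤ a k) → Summable a →
        (∀ N : ℤ, N ≤ 0 →
          (∑' k : {k : ℤ // k ≤ N}, a k.1) ≤
            (1 / 2) * (∑' k : {k : ℤ // k ≤ N + (L : ℤ)}, a k.1)
              + Λ₁ * (∑' k : {k : ℤ // k ≤ N}, (2 : ℝ) ^ (γ * ((k.1 : ℝ) - (N : ℝ))) * a k.1)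
              + Λ₂ * (∑' k : {k : ℤ // N + 1 ≤ k}, (2 : ℝ) ^ (γ * ((N : ℝ) - (k.1 : ℝ))) * a k.1)
              + Λ₂ * (2 : ℝ) ^ (γ * (N : ℝ))) →
        ∀ N : ℤ, N ≤ Nbar →
          (∑' k : {k : ℤ // k ≤ N}, a k.1) ≤
            Λ₃ * ((∑' k : {k : ℤ // N + 1 ≤ k}, (2 : ℝ) ^ (γ * ((N : ℝ) - (k.1 : ℝ))) * a k.1)
              + (2 : ℝ) ^ (γ * (N : ℝ))) := by
  -- choose m with 8Λ₁ ≤ 2^{γ m}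
  have h2γ : (1:ℝ) < (2:ℝ) ^ γ := by
    have h := Real.rpow_lt_rpow_of_exponent_lt (x := (2:ℝ)) (y := 0) (z := γ) one_lt_two hγ
    simpa [Real.rpow_zero] using h
  obtain ⟨m, hm⟩ := pow_unbounded_of_one_lt (R := ℝ) (8 * Λ₁) h2γ
  set c1 : ℝ := (2:ℝ) ^ (γ * (m:ℝ)) with hc1def
  set e1 : ℝ := (2:ℝ) ^ (-(γ * (m:ℝ))) with he1def
  set c2 : ℝ := (2:ℝ) ^ (γ * ((m:ℝ) + (L:ℝ))) with hc2def
  have hc1 : (0:ℝ) < c1 := by rw [hc1def]; exact r2pos _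
  have hc2 : (0:ℝ) < c2 := by rw [hc2def]; exact r2pos _
  have he1 : (0:ℝ) < e1 := by rw [he1def]; exact r2pos _
  have h8 : 8 * Λ₁ ≤ c1 := by
    have hpow : ((2:ℝ) ^ γ) ^ m = c1 := by
      rw [hc1def, Real.rpow_mul (by norm_num : (0:ℝ) ≤ 2), Real.rpow_natCast]
    linarith [hpow ▸ hm]
  have he1c1 : e1 * c1 = 1 := by
    rw [he1def, hc1def, ← r2add, show -(γ * (m:ℝ)) + γ * (m:ℝ) = 0 from by ring,
      Real.rpow_zero]
  have hΛe : Λ₁ * e1 ≤ 1 / 8 := by nlinarith [mul_le_mul_of_nonneg_right h8 he1.le]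
  refine ⟨3 * (c2 + (Λ₁ + Λ₂ + 1) * c1) + 1, ?_, -(m:ℤ),
    neg_nonpos.mpr (Int.natCast_nonneg m), ?_⟩
  · nlinarith [mul_pos (show (0:ℝ) < Λ₁ + Λ₂ + 1 by linarith) hc1]
  intro a ha hsum hyp N hN
  set M : ℤ := N + (m:ℤ) with hMdef
  have hNM : N ≤ M := by omega
  have hM0 : M ≤ 0 := by omega
  have hNL : N ≤ M + (L:ℤ) := by omega
  have hypM : SS a M ≤ 1 / 2 * SS a (M + (L:ℤ)) + Λ₁ * UU γ a M + Λ₂ * TT γ a M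
      + Λ₂ * (2:ℝ) ^ (γ * ((M:ℤ):ℝ)) := hyp M hM0
  have hT0 : 0 ≤ TT γ a N := TT_nonneg γ a ha N
  have hS0 : 0 ≤ SS a N := SS_nonneg a ha N
  have hp : (0:ℝ) < (2:ℝ) ^ (γ * ((N:ℤ):ℝ)) := r2pos _
  have h1 : SS a N ≤ SS a M := SS_mono a ha hsum hNM
  -- S(M+L) ≤ S(N) + c2 T(N)
  have h2 := SS_bnd γ hγ a ha hsum hNL
  rw [show γ * ((((M + (L:ℤ)):ℤ):ℝ) - ((N:ℤ):ℝ)) = γ * ((m:ℝ) + (L:ℝ)) from by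
      push_cast [hMdef]; ring, ← hc2def] at h2
  -- U(M) ≤ e1 S(N) + c1 T(N)
  have h3 := UU_bnd γ hγ a ha hsum hNM
  rw [show γ * (((N:ℤ):ℝ) - ((M:ℤ):ℝ)) = -(γ * (m:ℝ)) from by push_cast [hMdef]; ring,
    show γ * (((M:ℤ):ℝ) - ((N:ℤ):ℝ)) = γ * (m:ℝ) from by push_cast [hMdef]; ring,
    ← he1def, ← hc1def] at h3
  -- T(M) ≤ c1 T(N)
  have h4 := TT_bnd γ hγ a ha hsum hNM
  rw [show γ * (((M:ℤ):ℝ) - ((N:ℤ):ℝ)) = γ * (m:ℝ) from by push_cast [hMdef]; ring,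
    ← hc1def] at h4
  -- 2^{γ M} = c1 2^{γ N}
  have hMeq : (2:ℝ) ^ (γ * ((M:ℤ):ℝ)) = c1 * (2:ℝ) ^ (γ * ((N:ℤ):ℝ)) := by
    rw [show γ * ((M:ℤ):ℝ) = γ * (m:ℝ) + γ * ((N:ℤ):ℝ) from by push_cast [hMdef]; ring,
      r2add, hc1def]
  rw [hMeq] at hypM
  have hmul1 : Λ₁ * UU γ a M ≤ Λ₁ * (e1 * SS a N + c1 * TT γ a N) :=
    mul_le_mul_of_nonneg_left h3 hΛ₁.le
  have hmul2 : Λ₂ * TT γ a M ≤ Λ₂ * (c1 * TT γ a N) :=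
    mul_le_mul_of_nonneg_left h4 hΛ₂.le
  have habs : Λ₁ * e1 * SS a N ≤ 1 / 8 * SS a N :=
    mul_le_mul_of_nonneg_right hΛe hS0
  have hKt : (1/2 * c2 + Λ₁ * c1 + Λ₂ * c1) * TT γ a N
      ≤ (3/8 * (3 * (c2 + (Λ₁ + Λ₂ + 1) * c1) + 1)) * TT γ a N := by
    refine mul_le_mul_of_nonneg_right ?_ hT0
    nlinarith [mul_pos hΛ₁ hc1, mul_pos hΛ₂ hc1]
  have hKp : (Λ₂ * c1) * (2:ℝ) ^ (γ * ((N:ℤ):ℝ))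
      ≤ (3/8 * (3 * (c2 + (Λ₁ + Λ₂ + 1) * c1) + 1)) * (2:ℝ) ^ (γ * ((N:ℤ):ℝ)) := by
    refine mul_le_mul_of_nonneg_right ?_ hp.le
    nlinarith [mul_pos hΛ₁ hc1, mul_pos hΛ₂ hc1]
  show SS a N ≤ (3 * (c2 + (Λ₁ + Λ₂ + 1) * c1) + 1) * (TT γ a N + (2:ℝ) ^ (γ * ((N:ℤ):ℝ)))
  linarith [h1, hypM, h2, hmul1, hmul2, habs, hKt, hKp, hT0, hS0, hp.le]
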